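/- Two genomes A and B over the same finite set of N genes are equal if and only if N = C + I/2, where C is the number of cycle components and I is the number of path components with an odd number of edges in the adjacency graph AG(A,B). -/
import Mathlib


/-! Basic definitions for genomes and the DCJ model, following
Bergeron–Mixtacki–Stoye and Yancopoulos et al. -/

/-- An *extremity* of a gene: the gene together with a Boolean distinguishing
its head (`true`) from its tail (`false`).  A gene set of cardinality `N`
has `2 * N` extremities. -/
abbrev Extremity (G : Type*) := G × Bool

/-- A *genome* over the gene set `G` is a partition of the set of extremities
into blocks of size two (*adjacencies*) and blocks of size one (*telomeres*).
Such a partition is faithfully encoded by the involution sending each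
extremity to the other element of its block (to itself for a telomere). -/
structure Genome (G : Type*) where
  f : Extremity G → Extremity G
  invol : Function.Involutive f

namespace Genome

variable {G : Type*}

/-- The block of the extremity `x` in the genome `A`: either the adjacency
`{x, A.f x}` (when `A.f x ≠ x`) or the telomere `{x}` (when `A.f x = x`). -/
def block (A : Genome G) (x : Extremity G) : Set (Extremity G) := {x, A.f x}

/-- The blocks (adjacencies and telomeres) of a genome. -/
def blocks (A : Genome G) : Set (Set (Extremity G)) := {s | ∃ x, s = A.block x}

end Genome

section AdjacencyGraph

variable {G : Type*}

/-- The edges of the adjacency graph `AG(A,B)` are indexed by the extremities: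
the edge of the extremity `x` joins the block of `x` in `A` with the block of
`x` in `B`.  Two edges `x`, `y` are related by `agStep A B` when they share an
endpoint, i.e. when `y` lies in the `A`-block or in the `B`-block of `x`. -/
def agStep (A B : Genome G) (x y : Extremity G) : Prop := A.f x = y ∨ B.f x = y

/-- The setoid identifying edges of `AG(A,B)` that lie in the same connected
component. -/
def agSetoid (A B : Genome G) : Setoid (Extremity G) :=
  ⟨Relation.EqvGen (agStep A B), Relation.EqvGen.is_equivalence _⟩

/-- The set of edges of the connected component `q` of `AG(A,B)`. -/
def componentEdges (A B : Genome G) (q : Quotient (agSetoid A B)) :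
    Set (Extremity G) :=
  {x | Quotient.mk (agSetoid A B) x = q}

/-- `IsAltPath fA fB n K` : the edge set `K` consists of `n + 1` distinct
edges `e 0, …, e n` forming a simple path: consecutive edges share a block,
alternately a block of the first genome (encoded by the involution `fA`) and
of the second one (`fB`), starting with `fA`; the two free gene ends of the
terminal edges are telomeres (of the second genome at `e 0`, and of the
appropriate genome at `e n` according to parity). -/
def IsAltPath (fA fB : Extremity G → Extremity G) (n : ℕ)
    (K : Set (Extremity G)) : Prop :=
  ∃ e : Fin (n + 1) → Extremity G,
    Function.Injective e ∧ Set.range e = K ∧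
    (∀ i : ℕ, ∀ h : i + 1 < n + 1,
      e ⟨i + 1, h⟩ = (if Even i then fA else fB) (e ⟨i, by omega⟩)) ∧
    fB (e 0) = e 0 ∧
    (if Odd n then fB else fA) (e ⟨n, by omega⟩) = e ⟨n, by omega⟩

/-- `IsAltCycle fA fB K` : the edge set `K` consists of `2 * n` distinct edges
(for some `n > 0`) arranged in a cycle, consecutive edges sharing a block,
alternately a block of the first genome (`fA`) and of the second (`fB`). -/
def IsAltCycle (fA fB : Extremity G → Extremity G) (K : Set (Extremity G)) :
    Prop :=
  ∃ n : ℕ, 0 < n ∧ ∃ e : ZMod (2 * n) → Extremity G,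
    Function.Injective e ∧ Set.range e = K ∧
    ∀ i : ZMod (2 * n), e (i + 1) = (if Even i.val then fA else fB) (e i)

/-- The component `q` of `AG(A,B)` is a cycle. -/
def IsCycleComponent (A B : Genome G) (q : Quotient (agSetoid A B)) : Prop :=
  IsAltCycle A.f B.f (componentEdges A B q) ∨
    IsAltCycle B.f A.f (componentEdges A B q)

/-- The component `q` of `AG(A,B)` is a simple path (with some number
`n + 1 ≥ 1` of edges). -/
def IsPathComponent (A B : Genome G) (q : Quotient (agSetoid A B)) : Prop :=
  ∃ n : ℕ,
    IsAltPath A.f B.f n (componentEdges A B q) ∨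
      IsAltPath B.f A.f n (componentEdges A B q)

/-- The component `q` of `AG(A,B)` is a simple path with an odd number of
edges (`n + 1` edges with `n` even). -/
def IsOddPathComponent (A B : Genome G) (q : Quotient (agSetoid A B)) : Prop :=
  ∃ n : ℕ, Even n ∧
    (IsAltPath A.f B.f n (componentEdges A B q) ∨
      IsAltPath B.f A.f n (componentEdges A B q))

/-- `C`, the number of cycle components of `AG(A,B)`. -/
noncomputable def numCycles (A B : Genome G) : ℕ :=
  Nat.card {q : Quotient (agSetoid A B) // IsCycleComponent A B q}

/-- `I`, the number of path components of `AG(A,B)` with an odd number of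
edges. -/
noncomputable def numOddPaths (A B : Genome G) : ℕ :=
  Nat.card {q : Quotient (agSetoid A B) // IsOddPathComponent A B q}

end AdjacencyGraph

section DCJ

variable {G : Type*} [DecidableEq G]

/-- Rewiring of the pairing `f` that matches `p` with `r` and `q` with `s`,
leaving everything else unchanged. -/
def rewire (f : Extremity G → Extremity G) (p q r s : Extremity G) :
    Extremity G → Extremity G := fun x =>
  if x = p then r else if x = r then p else if x = q then s else
    if x = s then q else f x

/-- A single DCJ operation transforming the genome `A` into the genome `A'`:
* two adjacencies `{p,q}`, `{r,s}` are replaced by `{p,r}`, `{q,s}` or by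
  `{p,s}`, `{q,r}`;
* an adjacency `{p,q}` and a telomere `{r}` are replaced by `{p,r}`, `{q}` or
  by `{p}`, `{q,r}`;
* an adjacency `{p,q}` is replaced by the two telomeres `{p}`, `{q}`;
* two telomeres `{p}`, `{q}` are replaced by the adjacency `{p,q}`.
All other blocks of `A` are unchanged. -/
def DCJStep (A A' : Genome G) : Prop :=
  (∃ p q r s : Extremity G, A.f p = q ∧ p ≠ q ∧ A.f r = s ∧ r ≠ s ∧
      p ≠ r ∧ p ≠ s ∧ q ≠ r ∧ q ≠ s ∧
      (A'.f = rewire A.f p q r s ∨ A'.f = rewire A.f p q s r)) ∨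
  (∃ p q r : Extremity G, A.f p = q ∧ p ≠ q ∧ A.f r = r ∧ r ≠ p ∧ r ≠ q ∧
      (A'.f = rewire A.f p q r q ∨ A'.f = rewire A.f q p r p)) ∨
  (∃ p q : Extremity G, A.f p = q ∧ p ≠ q ∧ A'.f = rewire A.f p q p q) ∨
  (∃ p q : Extremity G, A.f p = p ∧ A.f q = q ∧ p ≠ q ∧
      A'.f = rewire A.f p q q p)

/-- The DCJ distance between two genomes: the least number of DCJ operations
transforming `A` into `B`. -/
noncomputable def dcjDist (A B : Genome G) : ℕ :=
  sInf {n : ℕ | ∃ g : ℕ → Genome G, g 0 = A ∧ g n = B ∧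
    ∀ i < n, DCJStep (g i) (g (i + 1))}

end DCJ

section Aux
variable {G : Type*}

lemma genome_ext {A B : Genome G} (h : A.f = B.f) : A = B := by
  cases A; cases B; simp_all

lemma altPath_card {f g : Extremity G → Extremity G} {n : ℕ} {K : Set (Extremity G)}
    (h : IsAltPath f g n K) : Nat.card K = n + 1 := by
  obtain ⟨e, hinj, hrange, -⟩ := h
  rw [← hrange, Nat.card_range_of_injective hinj, Nat.card_eq_fintype_card, Fintype.card_fin]

lemma altPath_zero {f g : Extremity G → Extremity G} {K : Set (Extremity G)}
    (h : IsAltPath f g 0 K) : ∀ x ∈ K, f x = x ∧ g x = x := by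
  obtain ⟨e, hinj, hrange, -, h0, hn⟩ := h
  intro x hx
  rw [← hrange] at hx
  obtain ⟨i, rfl⟩ := hx
  have hi : i = 0 := Fin.ext (by have := i.isLt; omega)
  subst hi
  norm_num at hn
  exact ⟨hn, h0⟩

lemma altCycle_card {f g : Extremity G → Extremity G} {K : Set (Extremity G)}
    (h : IsAltCycle f g K) : ∃ n, 0 < n ∧ Nat.card K = 2 * n := by
  obtain ⟨n, hn, e, hinj, hrange, -⟩ := h
  haveI : NeZero (2 * n) := ⟨by omega⟩
  exact ⟨n, hn, by rw [← hrange, Nat.card_range_of_injective hinj,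
    Nat.card_eq_fintype_card, ZMod.card]⟩

lemma altCycle_two {f g : Extremity G → Extremity G} {K : Set (Extremity G)}
    (hf : Function.Involutive f) (hg : Function.Involutive g)
    (h : IsAltCycle f g K) (hcard : Nat.card K = 2) :
    ∀ x ∈ K, f x = g x := by
  obtain ⟨n, hn, e, hinj, hrange, hstep⟩ := h
  haveI : NeZero (2 * n) := ⟨by omega⟩
  have hcK : Nat.card K = 2 * n := by
    rw [← hrange, Nat.card_range_of_injective hinj, Nat.card_eq_fintype_card, ZMod.card]
  have hn1 : n = 1 := by omega
  subst hn1
  have hv0 : ((0 : ZMod (2*1)).val) = 0 := by decide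
  have hv1 : ((1 : ZMod (2*1)).val) = 1 := by decide
  have h0 : e 1 = f (e 0) := by
    have := hstep 0; rwa [hv0, if_pos (Even.zero), zero_add] at this
  have h1 : e 0 = g (e 1) := by
    have := hstep 1
    rw [hv1, if_neg (by decide : ¬ Even 1)] at this
    rwa [show ((1:ZMod (2*1)) + 1) = 0 by decide] at this
  intro x hx
  rw [← hrange] at hx
  obtain ⟨i, rfl⟩ := hx
  rcases (by decide : ∀ j : ZMod (2*1), j = 0 ∨ j = 1) i with rfl | rfl
  · rw [← h0, h1, hg]
  · rw [h0, hf, ← h0]; exact h1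

lemma isAltCycle_pair {f : Extremity G → Extremity G} (hf : Function.Involutive f)
    {x : Extremity G} (hx : f x ≠ x) : IsAltCycle f f {x, f x} := by
  refine ⟨1, one_pos, fun i => if i = 0 then x else f x, ?_, ?_, ?_⟩
  all_goals
    have e0 : (fun i : ZMod (2*1) => if i = 0 then x else f x) 0 = x := if_pos rfl
    have e1 : (fun i : ZMod (2*1) => if i = 0 then x else f x) 1 = f x :=
      if_neg (by decide)
  · intro i j hij
    rcases (by decide : ∀ j : ZMod (2*1), j = 0 ∨ j = 1) i with rfl | rfl <;>
      rcases (by decide : ∀ j : ZMod (2*1), j = 0 ∨ j = 1) j with rfl | rfl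
    · rfl
    · exact absurd (by rw [e0, e1] at hij; exact hij.symm) hx
    · exact absurd (by rw [e0, e1] at hij; exact hij) hx
    · rfl
  · ext y
    constructor
    · rintro ⟨i, rfl⟩
      rcases (by decide : ∀ j : ZMod (2*1), j = 0 ∨ j = 1) i with rfl | rfl
      · rw [e0]; exact Set.mem_insert _ _
      · rw [e1]; exact Set.mem_insert_iff.mpr (Or.inr rfl)
    · rintro (rfl | rfl)
      · exact ⟨0, e0⟩
      · exact ⟨1, e1⟩
  · intro i
    rw [ite_self]
    rcases (by decide : ∀ j : ZMod (2*1), j = 0 ∨ j = 1) i with rfl | rfl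
    · rw [zero_add, e0, e1]
    · rw [show ((1:ZMod (2*1)) + 1) = 0 by decide, e0, e1, hf x]

lemma isAltPath_single {f : Extremity G → Extremity G} {x : Extremity G} (hx : f x = x) :
    IsAltPath f f 0 {x} := by
  refine ⟨fun _ => x, fun a b _ => Fin.ext (by have := a.isLt; have := b.isLt; omega), by
      simp [Set.range_const], fun i h => by omega, hx, by simpa using hx⟩

lemma eqvGen_self (A : Genome G) (x y : Extremity G) :
    Relation.EqvGen (agStep A A) x y ↔ (y = x ∨ y = A.f x) := by
  constructor
  · intro h
    induction h with
    | rel a b hab => rcases hab with h | h <;> exact Or.inr h.symm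
    | refl a => exact Or.inl rfl
    | symm a b _ ih =>
        rcases ih with rfl | rfl
        · exact Or.inl rfl
        · exact Or.inr (A.invol a).symm
    | trans a b c _ _ ih1 ih2 =>
        rcases ih1 with rfl | rfl
        · exact ih2
        · rcases ih2 with rfl | rfl
          · exact Or.inr rfl
          · exact Or.inl (A.invol a)
  · rintro (rfl | rfl)
    · exact Relation.EqvGen.refl _
    · exact Relation.EqvGen.rel _ _ (Or.inl rfl)

lemma componentEdges_self (A : Genome G) (x : Extremity G) :
    componentEdges A A (Quotient.mk (agSetoid A A) x) = {x, A.f x} := by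
  ext y
  show Quotient.mk (agSetoid A A) y = Quotient.mk (agSetoid A A) x ↔ _
  rw [Quotient.eq]
  show Relation.EqvGen (agStep A A) y x ↔ _
  rw [eqvGen_self]
  constructor
  · rintro (rfl | h)
    · exact Set.mem_insert _ _
    · exact Set.mem_insert_iff.mpr (Or.inr (by
        rw [h, A.invol]; exact Set.mem_singleton _))
  · rintro (rfl | h)
    · exact Or.inl rfl
    · exact Or.inr (by rw [Set.mem_singleton_iff.mp h, A.invol])

end Aux

open Finset in
lemma key {G : Type*} [Fintype G] (A B : Genome G) :
    A = B ↔ 2 * Fintype.card G = 2 * numCycles A B + numOddPaths A B := by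
  classical
  haveI : Fintype (Quotient (agSetoid A B)) := Fintype.ofFinite _
  -- card of components as filter cards
  have hcard : ∀ q : Quotient (agSetoid A B),
      Nat.card (componentEdges A B q)
        = (univ.filter (fun x : Extremity G => Quotient.mk (agSetoid A B) x = q)).card := by
    intro q
    rw [show componentEdges A B q = {x | Quotient.mk (agSetoid A B) x = q} from rfl,
      Nat.card_eq_card_toFinset, Set.toFinset_setOf]
  -- total sum of component sizes
  have hsumκ : ∑ q : Quotient (agSetoid A B), Nat.card (componentEdges A B q)
      = 2 * Fintype.card G := by
    have h1 := Finset.card_eq_sum_card_fiberwise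
      (f := fun x : Extremity G => Quotient.mk (agSetoid A B) x)
      (s := univ) (t := univ) (fun x _ => mem_univ _)
    have h2 : ∑ q : Quotient (agSetoid A B), Nat.card (componentEdges A B q)
        = (univ : Finset (Extremity G)).card := by
      rw [h1]; exact sum_congr rfl fun q _ => hcard q
    rw [h2]
    simp [Fintype.card_prod, mul_comm]
  -- each component nonempty
  have hpos : ∀ q : Quotient (agSetoid A B), 1 ≤ Nat.card (componentEdges A B q) := by
    intro q
    obtain ⟨x, rfl⟩ := Quotient.exists_rep q
    haveI : Nonempty (componentEdges A B (Quotient.mk (agSetoid A B) x)) := ⟨⟨x, rfl⟩⟩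
    exact Nat.card_pos
  -- the weight function
  set w : Quotient (agSetoid A B) → ℕ := fun q =>
    if IsCycleComponent A B q then 2 else if IsOddPathComponent A B q then 1 else 0
    with hwdef
  have hdisj : ∀ q, IsCycleComponent A B q → ¬ IsOddPathComponent A B q := by
    rintro q hc ⟨n, hne, hp⟩
    have h2 : Nat.card (componentEdges A B q) = n + 1 := by
      rcases hp with h | h <;> exact altPath_card h
    have h1 : ∃ m, 0 < m ∧ Nat.card (componentEdges A B q) = 2 * m := by
      rcases hc with h | h <;> exact altCycle_card h
    obtain ⟨m, hm, h1⟩ := h1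
    obtain ⟨k, rfl⟩ := hne
    omega
  have hwκ : ∀ q, w q ≤ Nat.card (componentEdges A B q) := by
    intro q
    by_cases hc : IsCycleComponent A B q
    · obtain ⟨m, hm, h1⟩ : ∃ m, 0 < m ∧ Nat.card (componentEdges A B q) = 2 * m := by
        rcases hc with h | h <;> exact altCycle_card h
      simp only [hwdef, if_pos hc]; omega
    · by_cases ho : IsOddPathComponent A B q
      · simp only [hwdef, if_neg hc, if_pos ho]; exact hpos q
      · simp only [hwdef, if_neg hc, if_neg ho]; omega
  have hsumw : ∑ q, w q = 2 * numCycles A B + numOddPaths A B := by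
    have hC : numCycles A B = (univ.filter (IsCycleComponent A B)).card := by
      rw [numCycles, Nat.card_eq_fintype_card, Fintype.card_subtype]
    have hI : numOddPaths A B = (univ.filter (IsOddPathComponent A B)).card := by
      rw [numOddPaths, Nat.card_eq_fintype_card, Fintype.card_subtype]
    have hsplit : ∀ q, w q = (if IsCycleComponent A B q then 2 else 0)
        + (if IsOddPathComponent A B q then 1 else 0) := by
      intro q
      by_cases h1 : IsCycleComponent A B q
      · simp only [hwdef, if_pos h1, if_neg (hdisj q h1), add_zero]
      · simp only [hwdef, if_neg h1, zero_add]
    rw [sum_congr rfl fun q _ => hsplit q, sum_add_distrib, ← sum_filter, ← sum_filter,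
      sum_const, sum_const, smul_eq_mul, smul_eq_mul, hC, hI]
    ring
  -- pointwise equality when A = B
  have hpoint : A = B → ∀ q, Nat.card (componentEdges A B q) = w q := by
    rintro rfl q
    obtain ⟨x, rfl⟩ := Quotient.exists_rep q
    by_cases hx : A.f x = x
    · have hone : Nat.card (componentEdges A A (Quotient.mk (agSetoid A A) x)) = 1 := by
        rw [componentEdges_self, hx]
        simp
      have hodd : IsOddPathComponent A A (Quotient.mk (agSetoid A A) x) :=
        ⟨0, Even.zero, Or.inl (by
          rw [componentEdges_self, hx]
          simpa using isAltPath_single hx)⟩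
      have hncyc : ¬ IsCycleComponent A A (Quotient.mk (agSetoid A A) x) := by
        intro hc
        obtain ⟨m, hm, h1⟩ : ∃ m, 0 < m ∧
            Nat.card (componentEdges A A (Quotient.mk (agSetoid A A) x)) = 2 * m := by
          rcases hc with h | h <;> exact altCycle_card h
        omega
      simp only [hwdef, if_neg hncyc, if_pos hodd, hone]
    · have htwo : Nat.card (componentEdges A A (Quotient.mk (agSetoid A A) x)) = 2 := by
        rw [componentEdges_self, Nat.card_coe_set_eq,
          Set.ncard_pair (fun h => hx h.symm)]
      have hcyc : IsCycleComponent A A (Quotient.mk (agSetoid A A) x) :=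
        Or.inl (by rw [componentEdges_self]; exact isAltCycle_pair A.invol hx)
      simp only [hwdef, if_pos hcyc, htwo]
  constructor
  · intro hAB
    rw [← hsumκ, ← hsumw]
    exact sum_congr rfl fun q _ => hpoint hAB q
  · intro hN
    have hsum_eq : ∑ q, w q = ∑ q, Nat.card (componentEdges A B q) := by
      rw [hsumκ, hsumw]; omega
    have heq : ∀ q ∈ univ, w q = Nat.card (componentEdges A B q) :=
      (Finset.sum_eq_sum_iff_of_le (fun q _ => hwκ q)).mp hsum_eq
    apply genome_ext
    funext x
    have hxq : x ∈ componentEdges A B (Quotient.mk (agSetoid A B) x) := rfl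
    have h2 := (heq _ (mem_univ (Quotient.mk (agSetoid A B) x))).symm
    have h1 := hpos (Quotient.mk (agSetoid A B) x)
    by_cases hc : IsCycleComponent A B (Quotient.mk (agSetoid A B) x)
    · have hκ2 : Nat.card (componentEdges A B (Quotient.mk (agSetoid A B) x)) = 2 := by
        rw [h2]; simp only [hwdef, if_pos hc]
      rcases hc with h | h
      · exact altCycle_two A.invol B.invol h hκ2 x hxq
      · exact (altCycle_two B.invol A.invol h hκ2 x hxq).symm
    · by_cases ho : IsOddPathComponent A B (Quotient.mk (agSetoid A B) x)
      · have hκ1 : Nat.card (componentEdges A B (Quotient.mk (agSetoid A B) x)) = 1 := by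
          rw [h2]; simp only [hwdef, if_neg hc, if_pos ho]
        obtain ⟨n, hne, hp⟩ := ho
        have hn0 : n = 0 := by
          have : Nat.card (componentEdges A B (Quotient.mk (agSetoid A B) x)) = n + 1 := by
            rcases hp with h | h <;> exact altPath_card h
          omega
        subst hn0
        rcases hp with h | h
        · obtain ⟨h1', h2'⟩ := altPath_zero h x hxq
          rw [h1', h2']
        · obtain ⟨h1', h2'⟩ := altPath_zero h x hxq
          rw [h1', h2']
      · exfalso
        rw [h2] at h1
        simp only [hwdef, if_neg hc, if_neg ho] at h1
        omega

/-- Two genomes over the same finite set of `N` genes are equal iff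
`N = C + I/2`, where `C` is the number of cycles and `I` the number of odd
paths in the adjacency graph `AG(A,B)`. -/
theorem genomes_eq_iff_card_eq_cycles_add_half_oddPaths
    {G : Type*} [Fintype G] (A B : Genome G) :
    A = B ↔
      (Fintype.card G : ℚ) =
        (numCycles A B : ℚ) + (numOddPaths A B : ℚ) / 2 := by
  rw [key A B]
  constructor
  · intro h
    have h' := congrArg (Nat.cast : ℕ → ℚ) h
    push_cast at h'
    linarith
  · intro h
    have h' : ((2 * Fintype.card G : ℕ) : ℚ)
        = ((2 * numCycles A B + numOddPaths A B : ℕ) : ℚ) := by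
      push_cast
      linarith
    exact_mod_cast h'
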